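/- Let γ be a type, U : Finset γ a finite universe, ι a type of indices, S : ι → Finset γ a family of subsets, and w : ι → ℝ weights with w j > 0 for all j. Let k : ℕ, l : ℕ → ι, and R : ℕ → Finset γ satisfy: R 0 = U; R (i+1) = R i \ S (l i) for all i; for every i < k, R i is nonempty and the greedy choice condition holds, namely for every j : ι, (card (S j ∩ R i) : ℝ) / w j ≤ (card (S (l i) ∩ R i) : ℝ) / w (l i); and R k = ∅. Let C : Finset ι be any cover, i.e., U ⊆ C.biUnion S. Then ∑ i in Finset.range k, w (l i) ≤ (Real.log (card U) + 1) · ∑ j in C, w j. -/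

import Mathlib

open Finset

lemma harm_diff {a b : ℕ} (hba : b ≤ a) (ha : 0 < a) :
    ((a : ℝ) - b) / a ≤ (harmonic a : ℝ) - harmonic b := by
  have h1 : (harmonic a : ℝ) - harmonic b = ∑ i ∈ Finset.Ico b a, ((i + 1 : ℕ) : ℝ)⁻¹ := by
    rw [Finset.sum_Ico_eq_sub _ hba]
    simp [harmonic]
  rw [h1]
  have h2 : (Finset.Ico b a).card • ((a : ℝ))⁻¹ ≤ ∑ i ∈ Finset.Ico b a, ((i + 1 : ℕ) : ℝ)⁻¹ := by
    apply Finset.card_nsmul_le_sum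
    intro i hi
    rw [Finset.mem_Ico] at hi
    have : (i + 1 : ℕ) ≤ a := hi.2
    rw [inv_le_inv₀ (by exact_mod_cast Nat.succ_pos i |>.trans_le this) (by positivity)]
    exact_mod_cast this
  calc ((a : ℝ) - b) / a = ((a - b : ℕ) : ℝ) * (a : ℝ)⁻¹ := by
        rw [Nat.cast_sub hba]; ring
    _ = (Finset.Ico b a).card • ((a : ℝ))⁻¹ := by rw [Nat.card_Ico, nsmul_eq_mul]
    _ ≤ _ := h2

/-- `(ln n + 1)`-approximation of the greedy algorithm for weighted set cover. -/
theorem stmt_6 {γ ι : Type*} [DecidableEq γ] (U : Finset γ) (S : ι → Finset γ)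
    (w : ι → ℝ) (hw : ∀ j, 0 < w j)
    (k : ℕ) (l : ℕ → ι) (R : ℕ → Finset γ)
    (hR0 : R 0 = U)
    (hRstep : ∀ i, R (i + 1) = R i \ S (l i))
    (hgreedy : ∀ i < k, (R i).Nonempty ∧
      ∀ j : ι, ((S j ∩ R i).card : ℝ) / w j ≤ ((S (l i) ∩ R i).card : ℝ) / w (l i))
    (hRk : R k = ∅)
    (C : Finset ι) (hC : U ⊆ C.biUnion S) :
    ∑ i ∈ Finset.range k, w (l i) ≤ (Real.log U.card + 1) * ∑ j ∈ C, w j := by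
  set W : ℝ := ∑ j ∈ C, w j with hWdef
  have hW : 0 ≤ W := Finset.sum_nonneg fun j _ => (hw j).le
  have hsub : ∀ i, R i ⊆ U := by
    intro i
    induction i with
    | zero => rw [hR0]
    | succ n ih => rw [hRstep]; exact (Finset.sdiff_subset).trans ih
  set H : ℕ → ℝ := fun n => (harmonic n : ℝ) with hHdef
  -- per-step bound
  have hstep : ∀ i < k, w (l i) ≤ W * (H (R i).card - H (R (i + 1)).card) := by
    intro i hik
    obtain ⟨hne, hgr⟩ := hgreedy i hik
    have hpos : 0 < ((R i).card : ℝ) := by exact_mod_cast Finset.card_pos.mpr hne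
    -- card relation
    have hcard : ((R (i+1)).card : ℕ) + (R i ∩ S (l i)).card = (R i).card := by
      rw [hRstep i]; exact Finset.card_sdiff_add_card_inter _ _
    -- covering bound : card (R i) ≤ ∑ j ∈ C, card (S j ∩ R i)
    have hcov : ((R i).card : ℝ) ≤ ∑ j ∈ C, ((S j ∩ R i).card : ℝ) := by
      have : R i ⊆ C.biUnion (fun j => S j ∩ R i) := by
        intro x hx
        have hxU : x ∈ C.biUnion S := hC (hsub i hx)
        rw [Finset.mem_biUnion] at hxU ⊢
        obtain ⟨j, hj, hxj⟩ := hxU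
        exact ⟨j, hj, Finset.mem_inter.mpr ⟨hxj, hx⟩⟩
      calc ((R i).card : ℝ) ≤ ((C.biUnion (fun j => S j ∩ R i)).card : ℝ) := by
            exact_mod_cast Finset.card_le_card this
        _ ≤ ∑ j ∈ C, ((S j ∩ R i).card : ℝ) := by
            exact_mod_cast Finset.card_biUnion_le
    set r : ℝ := ((S (l i) ∩ R i).card : ℝ) / w (l i) with hrdef
    have hri : ((R i).card : ℝ) ≤ W * r := by
      calc ((R i).card : ℝ) ≤ ∑ j ∈ C, ((S j ∩ R i).card : ℝ) := hcov
        _ ≤ ∑ j ∈ C, w j * r := by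
            apply Finset.sum_le_sum
            intro j _
            have := hgr j
            rw [div_le_iff₀ (hw j)] at this
            linarith [this]
        _ = W * r := by rw [hWdef, Finset.sum_mul]
    -- so w (l i) ≤ W * card(S(l i) ∩ R i) / card (R i)
    have hri' : ((R i).card : ℝ) * w (l i) ≤ W * ((S (l i) ∩ R i).card : ℝ) := by
      rw [hrdef, mul_div_assoc'] at hri
      exact (le_div_iff₀ (hw (l i))).mp hri
    have hkey : w (l i) ≤ W * (((S (l i) ∩ R i).card : ℝ) / (R i).card) := by
      rw [mul_div_assoc', le_div_iff₀ hpos, mul_comm]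
      exact hri' 
    refine hkey.trans ?_
    apply mul_le_mul_of_nonneg_left _ hW
    have hle : (R (i+1)).card ≤ (R i).card := by omega
    have hdiff : (((R i).card : ℝ) - (R (i+1)).card) / (R i).card ≤ H (R i).card - H (R (i+1)).card :=
      harm_diff hle (Finset.card_pos.mpr hne)
    have hceq : ((S (l i) ∩ R i).card : ℝ) = ((R i).card : ℝ) - (R (i + 1)).card := by
      rw [Finset.inter_comm]
      have hc : ((R (i+1)).card : ℝ) + ((R i ∩ S (l i)).card : ℝ) = ((R i).card : ℝ) := by
        exact_mod_cast hcard
      linarith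
    rw [hceq]
    exact hdiff
  -- sum up
  have hsum : ∑ i ∈ Finset.range k, w (l i) ≤ W * (H (R 0).card - H (R k).card) := by
    calc ∑ i ∈ Finset.range k, w (l i)
        ≤ ∑ i ∈ Finset.range k, W * (H (R i).card - H (R (i+1)).card) := by
          apply Finset.sum_le_sum
          intro i hi
          exact hstep i (Finset.mem_range.mp hi)
      _ = W * ∑ i ∈ Finset.range k, (H (R i).card - H (R (i+1)).card) := by
          rw [Finset.mul_sum]
      _ = W * (H (R 0).card - H (R k).card) := by
          rw [Finset.sum_range_sub' (fun i => H (R i).card)]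
  rw [hRk, hR0] at hsum
  simp only [Finset.card_empty] at hsum
  have hH0 : H 0 = 0 := by simp [hHdef]
  rw [hH0, sub_zero] at hsum
  refine hsum.trans ?_
  rw [mul_comm]
  apply mul_le_mul_of_nonneg_right _ hW
  have := harmonic_le_one_add_log U.card
  rw [hHdef]
  linarith
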